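/- If ηHη⁻¹ is Hermitian for an invertible matrix η, then for every real t, η e^{-iHt} η⁻¹ is unitary. -/

import Mathlib

theorem stmt_6 {n : ℕ} (H η : Matrix (Fin n) (Fin n) ℂ)
    (hη : IsUnit η) (hsim : (η * H * η⁻¹).IsHermitian) :
    ∀ t : ℝ,
      let U := η * NormedSpace.exp ((-(Complex.I * t)) • H) * η⁻¹
      U * U.conjTranspose = 1 := by
  intro t U
  set a : ℂ := -(Complex.I * t) with ha
  set K : Matrix (Fin n) (Fin n) ℂ := η * H * η⁻¹ with hK
  have hU : U = NormedSpace.exp (a • K) := by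
    rw [show a • K = η * (a • H) * η⁻¹ by
      rw [hK]; rw [Matrix.mul_smul, Matrix.smul_mul]]
    exact (Matrix.exp_conj η (a • H) hη).symm
  have hUh : U.conjTranspose = NormedSpace.exp ((starRingEnd ℂ a) • K) := by
    rw [hU, ← Matrix.exp_conjTranspose]
    congr 1
    rw [Matrix.conjTranspose_smul, hsim.eq]
    rfl
  rw [hUh, hU, ← Matrix.exp_add_of_commute]
  · rw [← add_smul]
    have : a + (starRingEnd ℂ) a = 0 := by
      rw [ha]
      simp [Complex.ext_iff]
    rw [this, zero_smul, NormedSpace.exp_zero]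
  · exact (Commute.refl K).smul_left _ |>.smul_right _
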